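/- The group G of homographies fixing the translation oval O(2^n) and the line at infinity acts 2-transitively on the q² affine points of O(2^n). -/

import Mathlib

open Matrix

variable {F : Type} [Field F]

/-- Two nonzero vectors represent the same projective point. -/
def projEq (v w : Fin 3 → F) : Prop := ∃ c : F, c ≠ 0 ∧ w = c • v

/-- Membership of a nonzero vector's projective point in the translation oval. -/
def ovalMem (n : ℕ) (v : Fin 3 → F) : Prop :=
  (∃ t c : F, c ≠ 0 ∧ v = c • ![t ^ 2 ^ n, t, 1]) ∨ (∃ c : F, c ≠ 0 ∧ v = c • ![1, 0, 0])

/-- `M` fixes the translation oval (setwise, projectively). -/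
def FixesOval (n : ℕ) (M : Matrix (Fin 3) (Fin 3) F) : Prop :=
  ∀ v : Fin 3 → F, v ≠ 0 → (ovalMem n v ↔ ovalMem n (M.mulVec v))

/-- `M` fixes the line `z = 0` (setwise). -/
def FixesLinf (M : Matrix (Fin 3) (Fin 3) F) : Prop :=
  ∀ v : Fin 3 → F, v ≠ 0 → (v 2 = 0 ↔ (M.mulVec v) 2 = 0)

/-- The affine homography t ↦ a t + b, as a matrix. -/
def Mab (n : ℕ) (a b : F) : Matrix (Fin 3) (Fin 3) F :=
  ![![a ^ 2 ^ n, 0, b ^ 2 ^ n], ![0, a, b], ![0, 0, 1]]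

lemma Mab_mulVec (n : ℕ) (a b x y z : F) :
    (Mab n a b).mulVec ![x, y, z] = ![a ^ 2 ^ n * x + b ^ 2 ^ n * z, a * y + b * z, z] := by
  funext i
  fin_cases i <;>
    simp [Mab, Matrix.mulVec, dotProduct, Fin.sum_univ_three]

lemma Mab_affine [CharP F 2] (n : ℕ) (a b t : F) :
    (Mab n a b).mulVec ![t ^ 2 ^ n, t, 1] = ![(a * t + b) ^ 2 ^ n, a * t + b, 1] := by
  rw [Mab_mulVec, add_pow_char_pow, mul_pow]
  ring_nf

lemma Mab_forward [CharP F 2] (n : ℕ) (a b : F) (ha : a ≠ 0) (v : Fin 3 → F)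
    (hv : ovalMem n v) : ovalMem n ((Mab n a b).mulVec v) := by
  rcases hv with ⟨t, c, hc, rfl⟩ | ⟨c, hc, rfl⟩
  · left
    refine ⟨a * t + b, c, hc, ?_⟩
    rw [Matrix.mulVec_smul, Mab_affine]
  · right
    refine ⟨c * a ^ 2 ^ n, mul_ne_zero hc (pow_ne_zero _ ha), ?_⟩
    rw [Matrix.mulVec_smul, show (![1, 0, 0] : Fin 3 → F) = ![(1:F), 0, 0] from rfl,
      Mab_mulVec]
    funext i
    fin_cases i <;> simp [mul_comm]

lemma Mab_mul [CharP F 2] (n : ℕ) (a b a' b' : F) :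
    (Mab n a' b') * (Mab n a b) = Mab n (a' * a) (a' * b + b') := by
  have key : (a' * b + b') ^ 2 ^ n = a' ^ 2 ^ n * b ^ 2 ^ n + b' ^ 2 ^ n := by
    rw [add_pow_char_pow, mul_pow]
  funext i j
  rw [Matrix.mul_apply]
  fin_cases i <;> fin_cases j <;>
    simp [Mab, Matrix.mul_apply, Fin.sum_univ_three, key, mul_pow, Matrix.vecHead, Matrix.vecTail]

lemma Mab_one (n : ℕ) : Mab n (1 : F) 0 = 1 := by
  funext i j
  fin_cases i <;> fin_cases j <;> simp [Mab, Matrix.one_apply, Matrix.vecHead, Matrix.vecTail]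

lemma Mab_inv_mul [CharP F 2] (n : ℕ) (a b : F) (ha : a ≠ 0) :
    (Mab n a⁻¹ (a⁻¹ * b)) * (Mab n a b) = 1 := by
  rw [Mab_mul, inv_mul_cancel₀ ha, CharTwo.add_self_eq_zero, Mab_one]

lemma Mab_fixesOval [CharP F 2] (n : ℕ) (a b : F) (ha : a ≠ 0) :
    FixesOval n (Mab n a b) := by
  intro v _
  constructor
  · exact Mab_forward n a b ha v
  · intro hM
    have := Mab_forward n a⁻¹ (a⁻¹ * b) (inv_ne_zero ha) _ hM
    rwa [Matrix.mulVec_mulVec, Mab_inv_mul n a b ha, Matrix.one_mulVec] at this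

lemma Mab_fixesLinf (n : ℕ) (a b : F) : FixesLinf (Mab n a b) := by
  intro v _
  have : (Mab n a b).mulVec v 2 = v 2 := by
    simp [Mab, Matrix.mulVec, dotProduct, Fin.sum_univ_three]
  rw [this]

lemma Mab_det (n : ℕ) (a b : F) : (Mab n a b).det = a ^ 2 ^ n * a := by
  rw [Matrix.det_fin_three]
  simp [Mab, Matrix.vecHead, Matrix.vecTail]

/-- The group of homographies fixing the translation oval O(2^n) and the line at infinity
acts 2-transitively on the q² affine points of O(2^n). -/
theorem stmt2 (h n : ℕ) (hh : 1 ≤ h) (hn : Nat.gcd n h = 1) (hq : 2 < 2 ^ h) [Fintype F]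
    (hcard : Fintype.card F = 2 ^ (2 * h)) [CharP F 2] :
    ∀ t₁ t₂ s₁ s₂ : F, t₁ ≠ t₂ → s₁ ≠ s₂ →
      ∃ M : Matrix (Fin 3) (Fin 3) F, IsUnit M.det ∧ FixesOval n M ∧ FixesLinf M ∧
        projEq (M.mulVec ![t₁ ^ 2 ^ n, t₁, 1]) ![s₁ ^ 2 ^ n, s₁, 1] ∧
        projEq (M.mulVec ![t₂ ^ 2 ^ n, t₂, 1]) ![s₂ ^ 2 ^ n, s₂, 1] := by
  intro t₁ t₂ s₁ s₂ ht hs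
  have htt : t₁ + t₂ ≠ 0 := by rw [← CharTwo.sub_eq_add]; exact sub_ne_zero.mpr ht
  have hss : s₁ + s₂ ≠ 0 := by rw [← CharTwo.sub_eq_add]; exact sub_ne_zero.mpr hs
  set a : F := (s₁ + s₂) * (t₁ + t₂)⁻¹ with ha_def
  have ha : a ≠ 0 := mul_ne_zero hss (inv_ne_zero htt)
  set b : F := s₁ + a * t₁ with hb_def
  have he1 : a * t₁ + b = s₁ := by
    rw [hb_def, add_comm s₁, ← add_assoc, CharTwo.add_self_eq_zero, zero_add]
  have he2 : a * t₂ + b = s₂ := by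
    have e : a * t₂ + b = a * (t₁ + t₂) + s₁ := by rw [hb_def]; ring
    rw [e, ha_def, mul_assoc, inv_mul_cancel₀ htt, mul_one,
      add_assoc, add_comm s₂ s₁, ← add_assoc, CharTwo.add_self_eq_zero, zero_add]
  refine ⟨Mab n a b, ?_, Mab_fixesOval n a b ha, Mab_fixesLinf n a b, ?_, ?_⟩
  · rw [Mab_det]
    exact (mul_ne_zero (pow_ne_zero _ ha) ha).isUnit
  · exact ⟨1, one_ne_zero, by rw [Mab_affine, he1, one_smul]⟩
  · exact ⟨1, one_ne_zero, by rw [Mab_affine, he2, one_smul]⟩
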